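/- Suppose E|F(..., ε_{-1}, ε_0, ε_1, ..., ε_n) − F(..., ε'_{-1}, ε'_0, ε_1, ..., ε_n)|^α ≤ C r^n for all n ∈ ℕ, where (ε'_i) is an independent i.i.d. copy of (ε_i) and 0 < r < 1. Then for each ℓ there is a measurable ℓ-variate function F_ℓ (obtained by fixing a realization of the past innovations) such that E|F(Z_ℓ) − F_ℓ(Z̃_{ℓ,ℓ})|^α ≤ C r^ℓ. -/

import Mathlib

open MeasureTheory ProbabilityTheory

lemma rpow_abs_sub_le {αe : ℝ} (h0 : 0 < αe) (h1 : αe ≤ 1) (a b : ℝ) :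
    |a - b| ^ αe ≤ |a| ^ αe + |b| ^ αe := by
  have h2 : |a - b| ≤ |a| + |b| := by
    calc |a - b| = |a + -b| := by rw [sub_eq_add_neg]
    _ ≤ |a| + |-b| := abs_add_le _ _
    _ = |a| + |b| := by rw [abs_neg]
  calc |a - b| ^ αe ≤ (|a| + |b|) ^ αe := Real.rpow_le_rpow (abs_nonneg _) h2 h0.le
  _ ≤ |a| ^ αe + |b| ^ αe := by
      have h := NNReal.rpow_add_le_add_rpow (Real.toNNReal |a|) (Real.toNNReal |b|) h0.le h1
      rw [← Real.toNNReal_add (abs_nonneg a) (abs_nonneg b)] at h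
      have h' := NNReal.coe_le_coe.2 h
      push_cast at h'
      rwa [Real.coe_toNNReal _ (by positivity), Real.coe_toNNReal _ (abs_nonneg a),
        Real.coe_toNNReal _ (abs_nonneg b)] at h'

lemma iIndepFun_comp_inj {Ω ι κ β : Type*} {mΩ : MeasurableSpace Ω} {mβ : MeasurableSpace β}
    {μ : Measure Ω} {f : ι → Ω → β} (h : iIndepFun f μ)
    {j : κ → ι} (hj : Function.Injective j) :
    iIndepFun (fun k => f (j k)) μ := by
  classical
  rw [iIndepFun_iff_measure_inter_preimage_eq_mul] at h ⊢
  intro S sets hsets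
  set sets' : ι → Set β := Function.extend j sets (fun _ => Set.univ) with hsets'
  have hext : ∀ k, sets' (j k) = sets k := fun k => hj.extend_apply _ _ k
  have h1 : (⋂ k ∈ S, f (j k) ⁻¹' sets k) = ⋂ p ∈ S.image j, f p ⁻¹' sets' p := by
    ext ω
    simp only [Set.mem_iInter, Finset.mem_image, forall_exists_index, and_imp, Set.mem_preimage]
    constructor
    · rintro hk p k hkS rfl
      rw [hext]; exact hk k hkS
    · intro hp k hk
      have := hp (j k) k hk rfl
      rwa [hext] at this
  have h2 : ∏ k ∈ S, μ (f (j k) ⁻¹' sets k) = ∏ p ∈ S.image j, μ (f p ⁻¹' sets' p) := by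
    rw [Finset.prod_image (fun a _ b _ hab => hj hab)]
    exact Finset.prod_congr rfl fun k _ => by rw [hext]
  rw [h1, h2]
  refine h (S.image j) (fun p hp => ?_)
  obtain ⟨k, hk, rfl⟩ := Finset.mem_image.mp hp
  rw [hext]; exact hsets k hk

lemma map_fun_eq_of_iid {Ω β : Type*} {mΩ : MeasurableSpace Ω} {mβ : MeasurableSpace β}
    {μ : Measure Ω} {f g : ℕ → Ω → β}
    (hf : ∀ m, Measurable (f m)) (hg : ∀ m, Measurable (g m))
    [IsFiniteMeasure μ]
    (hfi : iIndepFun f μ) (hgi : iIndepFun g μ)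
    (hd : ∀ m, Measure.map (f m) μ = Measure.map (g m) μ) :
    Measure.map (fun ω m => f m ω) μ = Measure.map (fun ω m => g m ω) μ := by
  have hPf : Measurable (fun ω m => f m ω) := measurable_pi_lambda _ hf
  have hPg : Measurable (fun ω m => g m ω) := measurable_pi_lambda _ hg
  have hPfm : Measurable (fun ω m => f m ω) := measurable_pi_lambda _ hf
  haveI : IsFiniteMeasure (Measure.map (fun ω m => f m ω) μ) :=
    Measure.isFiniteMeasure_map μ _
  refine ext_of_generate_finite
    (squareCylinders (fun _ : ℕ => {s : Set β | MeasurableSet s}))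
    generateFrom_squareCylinders.symm
    (isPiSystem_squareCylinders (fun _ => MeasurableSpace.isPiSystem_measurableSet)
      (fun _ => MeasurableSet.univ)) ?_ ?_
  · rintro s ⟨sFin, t, ht, rfl⟩
    have htm : ∀ i, MeasurableSet (t i) := fun i => ht i (Set.mem_univ i)
    have hpiMeas : MeasurableSet ((sFin : Set ℕ).pi t) :=
      MeasurableSet.pi (Finset.countable_toSet sFin) (fun i _ => htm i)
    rw [Measure.map_apply hPf hpiMeas, Measure.map_apply hPg hpiMeas]
    have hprf : (fun ω m => f m ω) ⁻¹' ((sFin : Set ℕ).pi t) = ⋂ m ∈ sFin, f m ⁻¹' t m := by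
      ext ω; simp [Set.mem_pi]
    have hprg : (fun ω m => g m ω) ⁻¹' ((sFin : Set ℕ).pi t) = ⋂ m ∈ sFin, g m ⁻¹' t m := by
      ext ω; simp [Set.mem_pi]
    rw [hprf, hprg, hfi.measure_inter_preimage_eq_mul sFin (fun i _ => htm i),
      hgi.measure_inter_preimage_eq_mul sFin (fun i _ => htm i)]
    refine Finset.prod_congr rfl fun m _ => ?_
    rw [← Measure.map_apply (hf m) (htm m), ← Measure.map_apply (hg m) (htm m), hd m]
  · rw [Measure.map_apply hPf MeasurableSet.univ, Measure.map_apply hPg MeasurableSet.univ]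
    simp
theorem finite_approx_of_gmc {Ω α : Type*} {mΩ : MeasurableSpace Ω}
    [MeasurableSpace α] (μ : Measure Ω) [IsProbabilityMeasure μ]
    (ν : Measure α) (ε ε' : ℤ → Ω → α)
    (hεmeas : ∀ i, Measurable (ε i)) (hε'meas : ∀ i, Measurable (ε' i))
    (hindep : iIndepFun
      (fun p : Bool × ℤ => if p.1 then ε' p.2 else ε p.2) μ)
    (hdist : ∀ i, Measure.map (ε i) μ = ν)
    (hdist' : ∀ i, Measure.map (ε' i) μ = ν)
    (F : (ℕ → α) → ℝ) (hF : Measurable F)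
    (αe C r : ℝ) (hα : 0 < αe) (hα1 : αe ≤ 1) (hC : 0 ≤ C)
    (hr0 : 0 < r) (hr1 : r < 1)
    (hgmc : ∀ n : ℕ,
      ∫ ω, |F (fun m => ε ((n : ℤ) - m) ω)
          - F (fun m => if m < n then ε ((n : ℤ) - m) ω else ε' ((n : ℤ) - m) ω)|
            ^ αe ∂μ
        ≤ C * r ^ n) :
    ∀ ℓ : ℕ, ∃ Fℓ : (Fin ℓ → α) → ℝ, Measurable Fℓ ∧
      ∫ ω, |F (fun m => ε ((ℓ : ℤ) - m) ω) - Fℓ (fun i => ε ((ℓ : ℤ) - i) ω)| ^ αe ∂μ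
        ≤ C * r ^ ℓ := by
  intro ℓ
  classical
  have hc : (0:ℝ) ≤ C * r ^ ℓ := by positivity
  -- the process sequences
  have hAsm : Measurable (fun ω (m : ℕ) => ε ((ℓ : ℤ) - m) ω) :=
    measurable_pi_lambda _ fun m => hεmeas _
  by_cases hInt : Integrable (fun ω => |F (fun m : ℕ => ε ((ℓ : ℤ) - m) ω)| ^ αe) μ
  swap
  · refine ⟨fun _ => 0, measurable_const, ?_⟩
    simp only [sub_zero]
    exact le_trans (le_of_eq (integral_undef hInt)) hc
  -- notation
  set χ : Bool × ℤ → Ω → α := fun p => if p.1 then ε' p.2 else ε p.2 with hχ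
  have hχmeas : ∀ p, Measurable (χ p) := by
    rintro ⟨b, i⟩; cases b
    · simpa [hχ] using hεmeas i
    · simpa [hχ] using hε'meas i
  have hχf : ∀ i, χ (false, i) = ε i := fun i => by simp [hχ]
  have hχt : ∀ i, χ (true, i) = ε' i := fun i => by simp [hχ]
  set Φ : Ω → ℤ → α := fun ω i => ε i ω with hΦ
  set Φ' : Ω → ℤ → α := fun ω i => ε' i ω with hΦ'
  have hΦm : Measurable Φ := measurable_pi_lambda _ fun i => hεmeas i
  have hΦ'm : Measurable Φ' := measurable_pi_lambda _ fun i => hε'meas i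
  -- independence of Φ and Φ'
  have hle : ∀ p : Bool × ℤ, MeasurableSpace.comap (χ p) inferInstance ≤ mΩ :=
    fun p => (hχmeas p).comap_le
  have hbig := indep_biSup_compl hle hindep {p : Bool × ℤ | p.1 = false}
  have hcomapΦ : MeasurableSpace.comap Φ MeasurableSpace.pi
      ≤ ⨆ p ∈ {p : Bool × ℤ | p.1 = false}, MeasurableSpace.comap (χ p) inferInstance := by
    rw [MeasurableSpace.pi, MeasurableSpace.comap_iSup]
    refine iSup_le fun i => ?_
    rw [MeasurableSpace.comap_comp]
    have : (fun x : ℤ → α => x i) ∘ Φ = ε i := rfl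
    rw [this]
    have h2 : MeasurableSpace.comap (ε i) inferInstance
        = MeasurableSpace.comap (χ (false, i)) inferInstance := by rw [hχf]
    rw [h2]
    exact le_iSup₂ (f := fun (p : Bool × ℤ) (_ : p ∈ {p : Bool × ℤ | p.1 = false}) =>
      MeasurableSpace.comap (χ p) inferInstance) (false, i) rfl
  have hcomapΦ' : MeasurableSpace.comap Φ' MeasurableSpace.pi
      ≤ ⨆ p ∈ {p : Bool × ℤ | p.1 = false}ᶜ, MeasurableSpace.comap (χ p) inferInstance := by
    rw [MeasurableSpace.pi, MeasurableSpace.comap_iSup]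
    refine iSup_le fun i => ?_
    rw [MeasurableSpace.comap_comp]
    have : (fun x : ℤ → α => x i) ∘ Φ' = ε' i := rfl
    rw [this]
    have h2 : MeasurableSpace.comap (ε' i) inferInstance
        = MeasurableSpace.comap (χ (true, i)) inferInstance := by rw [hχt]
    rw [h2]
    exact le_iSup₂ (f := fun (p : Bool × ℤ) (_ : p ∈ {p : Bool × ℤ | p.1 = false}ᶜ) =>
      MeasurableSpace.comap (χ p) inferInstance) (true, i) (by simp)
  have hΦΦ' : IndepFun Φ Φ' μ :=
    indep_of_indep_of_le_right (indep_of_indep_of_le_left hbig hcomapΦ) hcomapΦ'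
  have hpairm : Measurable (fun ω => (Φ ω, Φ' ω)) := hΦm.prodMk hΦ'm
  have hpair : Measure.map (fun ω => (Φ ω, Φ' ω)) μ
      = (Measure.map Φ μ).prod (Measure.map Φ' μ) :=
    (indepFun_iff_map_prod_eq_prod_map_map hΦm.aemeasurable hΦ'm.aemeasurable).mp hΦΦ'
  -- law of the mixed sequence equals law of the pure sequence
  set jA : ℕ → Bool × ℤ := fun m => (false, (ℓ : ℤ) - m) with hjA
  set jB : ℕ → Bool × ℤ := fun m => (decide (¬ m < ℓ), (ℓ : ℤ) - m) with hjB
  have hjAinj : Function.Injective jA := by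
    intro a b hab
    have h2 : (ℓ : ℤ) - a = (ℓ : ℤ) - b := congrArg Prod.snd hab
    omega
  have hjBinj : Function.Injective jB := by
    intro a b hab
    have h2 : (ℓ : ℤ) - a = (ℓ : ℤ) - b := congrArg Prod.snd hab
    omega
  have hfamA : (fun m : ℕ => χ (jA m)) = fun m : ℕ => ε ((ℓ : ℤ) - m) := by
    funext m; simp [hjA, hχ]
  have hfamB : (fun m : ℕ => χ (jB m))
      = fun (m : ℕ) (ω : Ω) => if m < ℓ then ε ((ℓ : ℤ) - m) ω else ε' ((ℓ : ℤ) - m) ω := by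
    funext m ω
    by_cases h : m < ℓ
    · have h2 : ¬ ℓ ≤ m := by omega
      simp [hjB, hχ, h, h2]
    · have h2 : ℓ ≤ m := by omega
      simp [hjB, hχ, h, h2]
  have hiA : iIndepFun
      (fun m : ℕ => ε ((ℓ : ℤ) - m)) μ := by
    rw [← hfamA]; exact iIndepFun_comp_inj hindep hjAinj
  have hiB : iIndepFun
      (fun (m : ℕ) (ω : Ω) => if m < ℓ then ε ((ℓ : ℤ) - m) ω else ε' ((ℓ : ℤ) - m) ω) μ := by
    rw [← hfamB]; exact iIndepFun_comp_inj hindep hjBinj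
  have hBsmcoord : ∀ m : ℕ,
      Measurable (fun ω => if m < ℓ then ε ((ℓ : ℤ) - m) ω else ε' ((ℓ : ℤ) - m) ω) := by
    intro m; by_cases h : m < ℓ <;> simp only [h, if_true, if_false]
    · exact hεmeas _
    · exact hε'meas _
  have hBsm : Measurable (fun ω (m : ℕ) =>
      if m < ℓ then ε ((ℓ : ℤ) - m) ω else ε' ((ℓ : ℤ) - m) ω) :=
    measurable_pi_lambda _ hBsmcoord
  have hlaw : Measure.map (fun ω (m : ℕ) =>
        if m < ℓ then ε ((ℓ : ℤ) - m) ω else ε' ((ℓ : ℤ) - m) ω) μ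
      = Measure.map (fun ω (m : ℕ) => ε ((ℓ : ℤ) - m) ω) μ := by
    refine map_fun_eq_of_iid hBsmcoord (fun m => hεmeas _) hiB hiA (fun m => ?_)
    by_cases h : m < ℓ
    · simp only [if_pos h]
    · simp only [if_neg h]; rw [hdist', hdist]
  -- integrability of the mixed term
  have hGm : Measurable (fun x : ℕ → α => |F x| ^ αe) :=
    (Real.continuous_rpow_const hα.le).measurable.comp hF.abs
  have hBInt : Integrable (fun ω => |F (fun m : ℕ =>
      if m < ℓ then ε ((ℓ : ℤ) - m) ω else ε' ((ℓ : ℤ) - m) ω)| ^ αe) μ := by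
    have h1 : Integrable (fun x : ℕ → α => |F x| ^ αe)
        (Measure.map (fun ω (m : ℕ) => ε ((ℓ : ℤ) - m) ω) μ) :=
      (integrable_map_measure hGm.aestronglyMeasurable hAsm.aemeasurable).mpr hInt
    rw [← hlaw] at h1
    exact (integrable_map_measure hGm.aestronglyMeasurable hBsm.aemeasurable).mp h1
  -- integrability of the difference
  have hDm : Measurable (fun ω => |F (fun m : ℕ => ε ((ℓ : ℤ) - m) ω)
      - F (fun m : ℕ => if m < ℓ then ε ((ℓ : ℤ) - m) ω else ε' ((ℓ : ℤ) - m) ω)| ^ αe) :=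
    (Real.continuous_rpow_const hα.le).measurable.comp
      (((hF.comp hAsm).sub (hF.comp hBsm)).abs)
  have hDInt : Integrable (fun ω => |F (fun m : ℕ => ε ((ℓ : ℤ) - m) ω)
      - F (fun m : ℕ => if m < ℓ then ε ((ℓ : ℤ) - m) ω else ε' ((ℓ : ℤ) - m) ω)| ^ αe) μ := by
    refine (hInt.add hBInt).mono' hDm.aestronglyMeasurable
      (Filter.Eventually.of_forall fun ω => ?_)
    rw [Real.norm_eq_abs, abs_of_nonneg (Real.rpow_nonneg (abs_nonneg _) _)]
    exact rpow_abs_sub_le hα hα1 _ _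
  -- move to the product space
  set f2 : (ℤ → α) × (ℤ → α) → ℝ := fun q =>
    |F (fun m : ℕ => q.1 ((ℓ : ℤ) - m))
      - F (fun m : ℕ => if m < ℓ then q.1 ((ℓ : ℤ) - m) else q.2 ((ℓ : ℤ) - m))| ^ αe
    with hf2
  have hf2m : Measurable f2 := by
    refine (Real.continuous_rpow_const hα.le).measurable.comp (Measurable.abs ?_)
    refine Measurable.sub ?_ ?_
    · exact hF.comp (measurable_pi_lambda _ fun m =>
        (measurable_pi_apply _).comp measurable_fst)
    · refine hF.comp (measurable_pi_lambda _ fun m => ?_)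
      by_cases h : m < ℓ <;> simp only [h, if_true, if_false]
      · exact (measurable_pi_apply _).comp measurable_fst
      · exact (measurable_pi_apply _).comp measurable_snd
  have hf2int : Integrable f2 ((Measure.map Φ μ).prod (Measure.map Φ' μ)) := by
    rw [← hpair]
    exact (integrable_map_measure hf2m.aestronglyMeasurable hpairm.aemeasurable).mpr hDInt
  have hf2le : ∫ q, f2 q ∂((Measure.map Φ μ).prod (Measure.map Φ' μ)) ≤ C * r ^ ℓ := by
    rw [← hpair, integral_map hpairm.aemeasurable hf2m.aestronglyMeasurable]
    exact hgmc ℓ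
  -- find a good slice
  haveI : IsProbabilityMeasure (Measure.map Φ' μ) :=
    Measure.isProbabilityMeasure_map hΦ'm.aemeasurable
  have key : ∃ y : ℤ → α, ∫ x, f2 (x, y) ∂(Measure.map Φ μ) ≤ C * r ^ ℓ := by
    by_contra hcon
    push_neg at hcon
    set g : (ℤ → α) → ℝ := fun y => ∫ x, f2 (x, y) ∂(Measure.map Φ μ) with hg
    have hgi : Integrable g (Measure.map Φ' μ) := hf2int.integral_prod_right
    have h5 : ∫ y, g y ∂(Measure.map Φ' μ) ≤ C * r ^ ℓ := by
      rw [hg, ← integral_prod_symm _ hf2int]; exact hf2le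
    have h6 : Integrable (fun y => g y - C * r ^ ℓ) (Measure.map Φ' μ) :=
      hgi.sub (integrable_const _)
    have h7 : ∫ y, (g y - C * r ^ ℓ) ∂(Measure.map Φ' μ) ≤ 0 := by
      rw [integral_sub hgi (integrable_const _), integral_const, probReal_univ,
        one_smul]
      linarith
    have h8 : 0 ≤ ∫ y, (g y - C * r ^ ℓ) ∂(Measure.map Φ' μ) :=
      integral_nonneg fun y => sub_nonneg.mpr (hcon y).le
    have h9 : ∫ y, (g y - C * r ^ ℓ) ∂(Measure.map Φ' μ) = 0 := le_antisymm h7 h8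
    have h10 := (integral_eq_zero_iff_of_nonneg
      (fun y => sub_nonneg.mpr (hcon y).le) h6).mp h9
    have h11 : ∀ᵐ y ∂(Measure.map Φ' μ), False := by
      filter_upwards [h10] with y hy
      have h12 : g y - C * r ^ ℓ = 0 := hy
      have := hcon y
      rw [hg] at h12
      linarith
    rw [Filter.eventually_false_iff_eq_bot, ae_eq_bot] at h11
    exact (IsProbabilityMeasure.ne_zero (Measure.map Φ' μ)) h11
  obtain ⟨y₀, hy₀⟩ := key
  refine ⟨fun v => F (fun m => if h : m < ℓ then v ⟨m, h⟩ else y₀ ((ℓ : ℤ) - m)), ?_, ?_⟩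
  · refine hF.comp (measurable_pi_lambda _ fun m => ?_)
    by_cases h : m < ℓ
    · simp only [dif_pos h]; exact measurable_pi_apply _
    · simp only [dif_neg h]; exact measurable_const
  · have hmy : Measurable fun x : ℤ → α => f2 (x, y₀) :=
      hf2m.comp (measurable_id.prodMk measurable_const)
    rw [integral_map hΦm.aemeasurable hmy.aestronglyMeasurable] at hy₀
    exact hy₀
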